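/- For every a ∈ A one has Σ a₍₁₎ · ε(σ(S(a₍₂₎))) = S²(σ⁻¹(a)). (This expresses δ̂ ⊳ a = S²(σ⁻¹(a)), where δ̂ = ε∘σ∘S is the modular element of the dual, the convolution inverse of the character ε∘σ.) -/

import Mathlib

open TensorProduct HopfAlgebra

/-- `f ⊳ a = Σ a₍₁₎ f(a₍₂₎)` : the standard left action of a linear functional on `A`. -/
noncomputable def lAct {A : Type*} [Ring A] [HopfAlgebra ℂ A] (f : A →ₗ[ℂ] ℂ) : A →ₗ[ℂ] A :=
  (TensorProduct.rid ℂ A).toLinearMap ∘ₗ LinearMap.lTensor A f ∘ₗ Coalgebra.comul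


open Coalgebra

namespace DualMod


variable {A : Type*} [Ring A] [HopfAlgebra ℂ A]

/-- product representation -/
noncomputable def Repr.mul {x y : A} {T_r1 : Type*} (r1 : Coalgebra.Repr ℂ x T_r1) {T_r2 : Type*} (r2 : Coalgebra.Repr ℂ y T_r2) :
    Coalgebra.Repr ℂ (x * y) (T_r1 × T_r2) where
  index := r1.index ×ˢ r2.index
  left := fun p => r1.left p.1 * r2.left p.2
  right := fun p => r1.right p.1 * r2.right p.2
  eq := by
    rw [Bialgebra.comul_mul, ← r1.eq, ← r2.eq, Finset.sum_mul_sum]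
    rw [Finset.sum_product]
    simp [Algebra.TensorProduct.tmul_mul_tmul]

@[simp] lemma Repr.mul_index {x y : A} {T_r1 : Type*} (r1 : Coalgebra.Repr ℂ x T_r1) {T_r2 : Type*} (r2 : Coalgebra.Repr ℂ y T_r2) :
    (Repr.mul r1 r2).index = r1.index ×ˢ r2.index := rfl

@[simp] lemma Repr.mul_left {x y : A} {T_r1 : Type*} (r1 : Coalgebra.Repr ℂ x T_r1) {T_r2 : Type*} (r2 : Coalgebra.Repr ℂ y T_r2)
    (p : r1.ι × r2.ι) : (Repr.mul r1 r2).left p = r1.left p.1 * r2.left p.2 := rfl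

@[simp] lemma Repr.mul_right {x y : A} {T_r1 : Type*} (r1 : Coalgebra.Repr ℂ x T_r1) {T_r2 : Type*} (r2 : Coalgebra.Repr ℂ y T_r2)
    (p : r1.ι × r2.ι) : (Repr.mul r1 r2).right p = r1.right p.1 * r2.right p.2 := rfl

/-- Σ ε(x₁) • x₂ = x -/
lemma sum_counit_smul {a : A} {T_r : Type*} (r : Coalgebra.Repr ℂ a T_r) :
    ∑ i ∈ r.index, counit (R := ℂ) (r.left i) • r.right i = a := by
  have h := congrArg (TensorProduct.lid ℂ A) (Coalgebra.sum_counit_tmul_eq r)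
  simpa only [map_sum, TensorProduct.lid_tmul, one_smul] using h

/-- Σ ε(x₂) • x₁ = x -/
lemma sum_smul_counit {a : A} {T_r : Type*} (r : Coalgebra.Repr ℂ a T_r) :
    ∑ i ∈ r.index, counit (R := ℂ) (r.right i) • r.left i = a := by
  have h := congrArg (TensorProduct.rid ℂ A) (Coalgebra.sum_tmul_counit_eq r)
  simpa only [map_sum, TensorProduct.rid_tmul, one_smul] using h

/-- a repr of 1 -/
noncomputable def oneRepr : Coalgebra.Repr ℂ (1 : A) Unit where
  index := {()}
  left := fun _ => 1
  right := fun _ => 1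
  eq := by simp [← Algebra.TensorProduct.one_def, Bialgebra.comulAlgHom_apply (R := ℂ) (A := A)]

lemma antipode_one : antipode (R := ℂ) (1 : A) = 1 := by
  have h := HopfAlgebra.sum_antipode_mul_eq_smul (R := ℂ) (oneRepr (A := A))
  simpa [oneRepr] using h

lemma counit_antipode (a : A) :
    counit (R := ℂ) (antipode (R := ℂ) a) = counit (R := ℂ) a := by
  have h := congrArg (counit (R := ℂ)) (HopfAlgebra.sum_antipode_mul_eq_smul (R := ℂ) (ℛ ℂ a))
  simp only [map_sum, Bialgebra.counit_mul, map_smul, smul_eq_mul, Bialgebra.counit_one,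
    mul_one] at h
  calc counit (R := ℂ) (antipode (R := ℂ) a)
      = counit (R := ℂ) (antipode (R := ℂ)
          (∑ i ∈ (ℛ ℂ a).index, counit (R := ℂ) ((ℛ ℂ a).right i) • (ℛ ℂ a).left i)) := by
        rw [sum_smul_counit]
    _ = ∑ i ∈ (ℛ ℂ a).index, counit (R := ℂ) ((ℛ ℂ a).right i) *
          counit (R := ℂ) (antipode (R := ℂ) ((ℛ ℂ a).left i)) := by
        rw [map_sum, map_sum]; simp only [map_smul, smul_eq_mul]
    _ = counit (R := ℂ) a := by
        rw [← h]; exact Finset.sum_congr rfl (fun i _ => mul_comm _ _)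


/-- Σ_k Σ_l S(x₁y₁) (x₂y₂) = ε(xy) • 1 -/
lemma prod_antipode_mul {x y : A} {T_r1 : Type*} (r1 : Coalgebra.Repr ℂ x T_r1) {T_r2 : Type*} (r2 : Coalgebra.Repr ℂ y T_r2) :
    ∑ k ∈ r1.index, ∑ l ∈ r2.index,
      antipode (R := ℂ) (r1.left k * r2.left l) * (r1.right k * r2.right l) =
      counit (R := ℂ) (x * y) • (1:A) := by
  have h := HopfAlgebra.sum_antipode_mul_eq_smul (R := ℂ) (Repr.mul r1 r2)
  rw [← h]
  exact (Finset.sum_product (s := r1.index) (t := r2.index)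
    (f := fun p => antipode (R := ℂ) ((Repr.mul r1 r2).left p) * (Repr.mul r1 r2).right p)).symm

lemma prod_mul_antipode {x y : A} {T_r1 : Type*} (r1 : Coalgebra.Repr ℂ x T_r1) {T_r2 : Type*} (r2 : Coalgebra.Repr ℂ y T_r2) :
    ∑ k ∈ r1.index, ∑ l ∈ r2.index,
      (r1.left k * r2.left l) * antipode (R := ℂ) (r1.right k * r2.right l) =
      counit (R := ℂ) (x * y) • (1:A) := by
  have h := HopfAlgebra.sum_mul_antipode_eq_smul (R := ℂ) (Repr.mul r1 r2)
  rw [← h]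
  exact (Finset.sum_product (s := r1.index) (t := r2.index)
    (f := fun p => (Repr.mul r1 r2).left p * antipode (R := ℂ) ((Repr.mul r1 r2).right p))).symm

lemma sum_sum_smul_mul {ι κ : Type*} (s : Finset ι) (t : Finset κ) (c : ι → ℂ) (d : κ → ℂ)
    (v : ι → A) (u : κ → A) :
    ∑ j ∈ t, ∑ i ∈ s, (c i * d j) • (v i * u j) =
      (∑ i ∈ s, c i • v i) * (∑ j ∈ t, d j • u j) := by
  rw [Finset.sum_mul_sum, Finset.sum_comm]
  exact Finset.sum_congr rfl fun j _ => Finset.sum_congr rfl fun i _ =>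
    (smul_mul_smul_comm _ _ _ _).symm

lemma sum_sum_smul_mul' {ι κ : Type*} (s : Finset ι) (t : Finset κ) (c : ι → ℂ) (d : κ → ℂ)
    (v : ι → A) (u : κ → A) :
    ∑ j ∈ t, ∑ i ∈ s, (c i * d j) • (u j * v i) =
      (∑ j ∈ t, d j • u j) * (∑ i ∈ s, c i • v i) := by
  rw [Finset.sum_mul_sum]
  exact Finset.sum_congr rfl fun j _ => Finset.sum_congr rfl fun i _ => by
    rw [smul_mul_smul_comm, mul_comm (d j) (c i)]

lemma collapseA {x y : A} {T_r1 : Type*} (r1 : Coalgebra.Repr ℂ x T_r1) {T_r2 : Type*} (r2 : Coalgebra.Repr ℂ y T_r2) (D : A) :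
    ∑ k ∈ r1.index, ∑ l ∈ r2.index,
      antipode (R := ℂ) (r1.left k * r2.left l) * ((r1.right k * r2.right l) * D) =
      (counit (R := ℂ) x * counit (R := ℂ) y) • D := by
  calc ∑ k ∈ r1.index, ∑ l ∈ r2.index,
      antipode (R := ℂ) (r1.left k * r2.left l) * ((r1.right k * r2.right l) * D)
      = (∑ k ∈ r1.index, ∑ l ∈ r2.index,
          antipode (R := ℂ) (r1.left k * r2.left l) * (r1.right k * r2.right l)) * D := by
        rw [Finset.sum_mul]
        refine Finset.sum_congr rfl fun k _ => ?_
        rw [Finset.sum_mul]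
        exact Finset.sum_congr rfl fun l _ => (mul_assoc _ _ _).symm
    _ = (counit (R := ℂ) (x * y) • (1:A)) * D := by rw [prod_antipode_mul r1 r2]
    _ = (counit (R := ℂ) x * counit (R := ℂ) y) • D := by
        rw [Bialgebra.counit_mul, smul_mul_assoc, one_mul]

lemma collapseB {x y : A} {T_r1 : Type*} (r1 : Coalgebra.Repr ℂ x T_r1) {T_r2 : Type*} (r2 : Coalgebra.Repr ℂ y T_r2) (C : A) :
    ∑ l ∈ r2.index, ∑ k ∈ r1.index,
      C * ((r1.left k * r2.left l) *
        (antipode (R := ℂ) (r2.right l) * antipode (R := ℂ) (r1.right k))) =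
      (counit (R := ℂ) x * counit (R := ℂ) y) • C := by
  have inner : ∑ l ∈ r2.index, ∑ k ∈ r1.index,
      (r1.left k * r2.left l) *
        (antipode (R := ℂ) (r2.right l) * antipode (R := ℂ) (r1.right k)) =
      (counit (R := ℂ) x * counit (R := ℂ) y) • (1:A) := by
    rw [Finset.sum_comm]
    have perk : ∀ k ∈ r1.index, ∑ l ∈ r2.index,
        (r1.left k * r2.left l) *
          (antipode (R := ℂ) (r2.right l) * antipode (R := ℂ) (r1.right k)) =
        counit (R := ℂ) y • (r1.left k * antipode (R := ℂ) (r1.right k)) := by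
      intro k _
      calc ∑ l ∈ r2.index, (r1.left k * r2.left l) *
            (antipode (R := ℂ) (r2.right l) * antipode (R := ℂ) (r1.right k))
          = r1.left k * ((∑ l ∈ r2.index, r2.left l * antipode (R := ℂ) (r2.right l)) *
              antipode (R := ℂ) (r1.right k)) := by
            rw [Finset.sum_mul, Finset.mul_sum]
            exact Finset.sum_congr rfl fun l _ => by
              rw [mul_assoc, ← mul_assoc (r2.left l)]
        _ = counit (R := ℂ) y • (r1.left k * antipode (R := ℂ) (r1.right k)) := by
            rw [HopfAlgebra.sum_mul_antipode_eq_smul r2, smul_mul_assoc, one_mul,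
              mul_smul_comm]
    calc ∑ k ∈ r1.index, ∑ l ∈ r2.index, (r1.left k * r2.left l) *
          (antipode (R := ℂ) (r2.right l) * antipode (R := ℂ) (r1.right k))
        = ∑ k ∈ r1.index, counit (R := ℂ) y •
            (r1.left k * antipode (R := ℂ) (r1.right k)) := by
          exact Finset.sum_congr rfl perk
      _ = counit (R := ℂ) y • (counit (R := ℂ) x • (1:A)) := by
          rw [← Finset.smul_sum, HopfAlgebra.sum_mul_antipode_eq_smul r1]
      _ = (counit (R := ℂ) x * counit (R := ℂ) y) • (1:A) := by
          rw [smul_smul, mul_comm]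
  calc ∑ l ∈ r2.index, ∑ k ∈ r1.index,
      C * ((r1.left k * r2.left l) *
        (antipode (R := ℂ) (r2.right l) * antipode (R := ℂ) (r1.right k)))
      = C * ((counit (R := ℂ) x * counit (R := ℂ) y) • (1:A)) := by
        rw [← inner, Finset.mul_sum]
        exact Finset.sum_congr rfl fun l _ => by rw [Finset.mul_sum]
    _ = (counit (R := ℂ) x * counit (R := ℂ) y) • C := by rw [mul_smul_comm, mul_one]


noncomputable def mul3 : A ⊗[ℂ] (A ⊗[ℂ] A) →ₗ[ℂ] A :=
  LinearMap.mul' ℂ A ∘ₗ LinearMap.lTensor A (LinearMap.mul' ℂ A)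

noncomputable def T6 : (A ⊗[ℂ] (A ⊗[ℂ] A)) ⊗[ℂ] (A ⊗[ℂ] (A ⊗[ℂ] A)) →ₗ[ℂ] A :=
  mul3 ∘ₗ
    TensorProduct.map ((antipode (R := ℂ)) ∘ₗ LinearMap.mul' ℂ A)
      (TensorProduct.map (LinearMap.mul' ℂ A)
        (LinearMap.mul' ℂ A ∘ₗ (TensorProduct.comm ℂ A A).toLinearMap ∘ₗ
          TensorProduct.map (antipode (R := ℂ)) (antipode (R := ℂ)))) ∘ₗ
    LinearMap.lTensor (A ⊗[ℂ] A) (TensorProduct.tensorTensorTensorComm ℂ A A A A).toLinearMap ∘ₗ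
    (TensorProduct.tensorTensorTensorComm ℂ A (A ⊗[ℂ] A) A (A ⊗[ℂ] A)).toLinearMap

@[simp] lemma T6_apply (x y z p q r : A) :
    T6 ((x ⊗ₜ[ℂ] (y ⊗ₜ[ℂ] z)) ⊗ₜ[ℂ] (p ⊗ₜ[ℂ] (q ⊗ₜ[ℂ] r))) =
      antipode (R := ℂ) (x * p) *
        ((y * q) * (antipode (R := ℂ) r * antipode (R := ℂ) z)) := by
  simp [T6, mul3, TensorProduct.tensorTensorTensorComm_tmul]

lemma antipode_mul (a b : A) :
    antipode (R := ℂ) (a * b) = antipode (R := ℂ) b * antipode (R := ℂ) a := by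
  set ra := ℛ ℂ a with hra
  set rb := ℛ ℂ b with hrb
  have ha := Coalgebra.sum_tmul_tmul_eq (R := ℂ) ra
    (fun i => ℛ ℂ (ra.left i)) (fun i => ℛ ℂ (ra.right i))
  have hb := Coalgebra.sum_tmul_tmul_eq (R := ℂ) rb
    (fun i => ℛ ℂ (rb.left i)) (fun i => ℛ ℂ (rb.right i))
  have key := congrArg₂ (fun u v => T6 (u ⊗ₜ[ℂ] v)) ha hb
  simp only [TensorProduct.sum_tmul, TensorProduct.tmul_sum, map_sum, T6_apply] at key
  have eA : ∑ j ∈ rb.index, ∑ l ∈ (ℛ ℂ (rb.left j)).index, ∑ i ∈ ra.index,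
      ∑ k ∈ (ℛ ℂ (ra.left i)).index,
      antipode (R := ℂ) ((ℛ ℂ (ra.left i)).left k * (ℛ ℂ (rb.left j)).left l) *
        ((ℛ ℂ (ra.left i)).right k * (ℛ ℂ (rb.left j)).right l *
          (antipode (R := ℂ) (rb.right j) * antipode (R := ℂ) (ra.right i))) =
      antipode (R := ℂ) b * antipode (R := ℂ) a := by
    calc ∑ j ∈ rb.index, ∑ l ∈ (ℛ ℂ (rb.left j)).index, ∑ i ∈ ra.index,
        ∑ k ∈ (ℛ ℂ (ra.left i)).index,
        antipode (R := ℂ) ((ℛ ℂ (ra.left i)).left k * (ℛ ℂ (rb.left j)).left l) *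
          ((ℛ ℂ (ra.left i)).right k * (ℛ ℂ (rb.left j)).right l *
            (antipode (R := ℂ) (rb.right j) * antipode (R := ℂ) (ra.right i)))
        = ∑ j ∈ rb.index, ∑ i ∈ ra.index, ∑ k ∈ (ℛ ℂ (ra.left i)).index,
            ∑ l ∈ (ℛ ℂ (rb.left j)).index,
            antipode (R := ℂ) ((ℛ ℂ (ra.left i)).left k * (ℛ ℂ (rb.left j)).left l) *
              ((ℛ ℂ (ra.left i)).right k * (ℛ ℂ (rb.left j)).right l *
                (antipode (R := ℂ) (rb.right j) * antipode (R := ℂ) (ra.right i))) := by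
          refine Finset.sum_congr rfl fun j _ => ?_
          rw [Finset.sum_comm]
          exact Finset.sum_congr rfl fun i _ => Finset.sum_comm
      _ = ∑ j ∈ rb.index, ∑ i ∈ ra.index,
            (counit (R := ℂ) (ra.left i) * counit (R := ℂ) (rb.left j)) •
              (antipode (R := ℂ) (rb.right j) * antipode (R := ℂ) (ra.right i)) := by
          exact Finset.sum_congr rfl fun j _ => Finset.sum_congr rfl fun i _ =>
            collapseA (ℛ ℂ (ra.left i)) (ℛ ℂ (rb.left j)) _
      _ = (∑ j ∈ rb.index, counit (R := ℂ) (rb.left j) • antipode (R := ℂ) (rb.right j)) *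
            (∑ i ∈ ra.index, counit (R := ℂ) (ra.left i) • antipode (R := ℂ) (ra.right i)) := by
          exact sum_sum_smul_mul' _ _ _ _ _ _
      _ = antipode (R := ℂ) b * antipode (R := ℂ) a := by
          congr 1
          · calc ∑ j ∈ rb.index, counit (R := ℂ) (rb.left j) • antipode (R := ℂ) (rb.right j)
                = antipode (R := ℂ)
                    (∑ j ∈ rb.index, counit (R := ℂ) (rb.left j) • rb.right j) := by
                  rw [map_sum]
                  exact Finset.sum_congr rfl fun j _ => (map_smul _ _ _).symm
              _ = antipode (R := ℂ) b := by rw [sum_counit_smul]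
          · calc ∑ i ∈ ra.index, counit (R := ℂ) (ra.left i) • antipode (R := ℂ) (ra.right i)
                = antipode (R := ℂ)
                    (∑ i ∈ ra.index, counit (R := ℂ) (ra.left i) • ra.right i) := by
                  rw [map_sum]
                  exact Finset.sum_congr rfl fun i _ => (map_smul _ _ _).symm
              _ = antipode (R := ℂ) a := by rw [sum_counit_smul]
  have eB : ∑ j ∈ rb.index, ∑ l ∈ (ℛ ℂ (rb.right j)).index, ∑ i ∈ ra.index,
      ∑ k ∈ (ℛ ℂ (ra.right i)).index,
      antipode (R := ℂ) (ra.left i * rb.left j) *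
        ((ℛ ℂ (ra.right i)).left k * (ℛ ℂ (rb.right j)).left l *
          (antipode (R := ℂ) ((ℛ ℂ (rb.right j)).right l) *
            antipode (R := ℂ) ((ℛ ℂ (ra.right i)).right k))) =
      antipode (R := ℂ) (a * b) := by
    calc ∑ j ∈ rb.index, ∑ l ∈ (ℛ ℂ (rb.right j)).index, ∑ i ∈ ra.index,
        ∑ k ∈ (ℛ ℂ (ra.right i)).index,
        antipode (R := ℂ) (ra.left i * rb.left j) *
          ((ℛ ℂ (ra.right i)).left k * (ℛ ℂ (rb.right j)).left l *
            (antipode (R := ℂ) ((ℛ ℂ (rb.right j)).right l) *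
              antipode (R := ℂ) ((ℛ ℂ (ra.right i)).right k)))
        = ∑ j ∈ rb.index, ∑ i ∈ ra.index, ∑ l ∈ (ℛ ℂ (rb.right j)).index,
            ∑ k ∈ (ℛ ℂ (ra.right i)).index,
            antipode (R := ℂ) (ra.left i * rb.left j) *
              ((ℛ ℂ (ra.right i)).left k * (ℛ ℂ (rb.right j)).left l *
                (antipode (R := ℂ) ((ℛ ℂ (rb.right j)).right l) *
                  antipode (R := ℂ) ((ℛ ℂ (ra.right i)).right k))) := by
          exact Finset.sum_congr rfl fun j _ => Finset.sum_comm
      _ = ∑ j ∈ rb.index, ∑ i ∈ ra.index,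
            (counit (R := ℂ) (ra.right i) * counit (R := ℂ) (rb.right j)) •
              antipode (R := ℂ) (ra.left i * rb.left j) := by
          exact Finset.sum_congr rfl fun j _ => Finset.sum_congr rfl fun i _ =>
            collapseB (ℛ ℂ (ra.right i)) (ℛ ℂ (rb.right j)) _
      _ = antipode (R := ℂ)
            (∑ j ∈ rb.index, ∑ i ∈ ra.index,
              (counit (R := ℂ) (ra.right i) * counit (R := ℂ) (rb.right j)) •
                (ra.left i * rb.left j)) := by
          rw [map_sum]
          exact Finset.sum_congr rfl fun j _ => by
            rw [map_sum]
            exact Finset.sum_congr rfl fun i _ => (map_smul _ _ _).symm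
      _ = antipode (R := ℂ) (a * b) := by
          rw [sum_sum_smul_mul, sum_smul_counit, sum_smul_counit]
  exact (eB.symm.trans (key.symm.trans eA))

section SinvSec

variable (hS : Function.Bijective (antipode (R := ℂ) (A := A)))

/-- inverse of the antipode -/
noncomputable def Sinv : A →ₗ[ℂ] A :=
  ((LinearEquiv.ofBijective (antipode (R := ℂ)) hS).symm : A ≃ₗ[ℂ] A)

lemma S_Sinv (x : A) : antipode (R := ℂ) (Sinv hS x) = x :=
  (LinearEquiv.ofBijective (antipode (R := ℂ)) hS).apply_symm_apply x

lemma Sinv_S (x : A) : Sinv hS (antipode (R := ℂ) x) = x :=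
  (LinearEquiv.ofBijective (antipode (R := ℂ)) hS).symm_apply_apply x

/-- Σ x₂ S⁻¹(x₁) = ε(x) 1 -/
lemma sum_mul_Sinv {a : A} {T_r : Type*} (r : Coalgebra.Repr ℂ a T_r) :
    ∑ i ∈ r.index, r.right i * Sinv hS (r.left i) = counit (R := ℂ) a • (1:A) := by
  apply hS.injective
  rw [map_sum]
  calc ∑ i ∈ r.index, antipode (R := ℂ) (r.right i * Sinv hS (r.left i))
      = ∑ i ∈ r.index, r.left i * antipode (R := ℂ) (r.right i) := by
        exact Finset.sum_congr rfl fun i _ => by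
          rw [antipode_mul, S_Sinv]
    _ = counit (R := ℂ) a • (1:A) := HopfAlgebra.sum_mul_antipode_eq_smul r
    _ = antipode (R := ℂ) (counit (R := ℂ) a • (1:A)) := by
        rw [map_smul, antipode_one]

end SinvSec

section PhiSec

variable (φ : A →ₗ[ℂ] ℂ)
variable (hφL : ∀ x : A,
  (TensorProduct.rid ℂ A) (LinearMap.lTensor A φ (Coalgebra.comul x)) = φ x • (1:A))

include hφL

/-- left invariance, pointwise -/
lemma phiL_repr {z : A} {T_r : Type*} (r : Coalgebra.Repr ℂ z T_r) :
    ∑ i ∈ r.index, φ (r.right i) • r.left i = φ z • (1:A) := by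
  have h := hφL z
  rw [← r.eq, map_sum, map_sum] at h
  simpa only [LinearMap.lTensor_tmul, TensorProduct.rid_tmul] using h

lemma phiL_prod {x y : A} {T_r1 : Type*} (r1 : Coalgebra.Repr ℂ x T_r1) {T_r2 : Type*} (r2 : Coalgebra.Repr ℂ y T_r2) :
    ∑ k ∈ r1.index, ∑ l ∈ r2.index,
      φ (r1.right k * r2.right l) • (r1.left k * r2.left l) = φ (x * y) • (1:A) := by
  have h := phiL_repr φ hφL (Repr.mul r1 r2)
  rw [← h]
  exact (Finset.sum_product (s := r1.index) (t := r2.index)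
    (f := fun p => φ ((Repr.mul r1 r2).right p) • (Repr.mul r1 r2).left p)).symm

/-- (A): Σ a₁ φ(b a₂) = Σ S(b₁) φ(b₂ a) -/
lemma exchange1 (a b : A) {T_ra : Type*} (ra : Coalgebra.Repr ℂ a T_ra) {T_rb : Type*} (rb : Coalgebra.Repr ℂ b T_rb) :
    ∑ j ∈ ra.index, φ (b * ra.right j) • ra.left j
      = ∑ i ∈ rb.index, φ (rb.right i * a) • antipode (R := ℂ) (rb.left i) := by
  set W : A →ₗ[ℂ] A :=
    ∑ j ∈ ra.index, (φ ∘ₗ LinearMap.mulRight ℂ (ra.right j)).smulRight (ra.left j) with hWdef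
  have hW : ∀ z : A, W z = ∑ j ∈ ra.index, φ (z * ra.right j) • ra.left j := by
    intro z
    simp [hWdef, LinearMap.sum_apply]
  have hU : ∀ {x : A} (r1 : Coalgebra.Repr ℂ x (A × A)),
      ∑ k ∈ r1.index, r1.left k * W (r1.right k) = φ (x * a) • (1:A) := by
    intro x r1
    rw [← phiL_prod φ hφL r1 ra]
    exact Finset.sum_congr rfl fun k _ => by
      rw [hW, Finset.mul_sum]
      exact Finset.sum_congr rfl fun j _ => by rw [mul_smul_comm]
  set T : A ⊗[ℂ] (A ⊗[ℂ] A) →ₗ[ℂ] A :=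
    LinearMap.mul' ℂ A ∘ₗ TensorProduct.map (antipode (R := ℂ))
      (LinearMap.mul' ℂ A ∘ₗ LinearMap.lTensor A W) with hTdef
  have hT : ∀ x y z : A, T (x ⊗ₜ[ℂ] (y ⊗ₜ[ℂ] z)) =
      antipode (R := ℂ) x * (y * W z) := by
    intro x y z; simp [hTdef]
  have hco := Coalgebra.sum_tmul_tmul_eq (R := ℂ) rb
    (fun i => ℛ ℂ (rb.left i)) (fun i => ℛ ℂ (rb.right i))
  have key := congrArg T hco
  simp only [map_sum, hT] at key
  calc ∑ j ∈ ra.index, φ (b * ra.right j) • ra.left j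
      = W b := (hW b).symm
    _ = W (∑ i ∈ rb.index, counit (R := ℂ) (rb.left i) • rb.right i) := by
        rw [sum_counit_smul]
    _ = ∑ i ∈ rb.index, counit (R := ℂ) (rb.left i) • W (rb.right i) := by
        rw [map_sum]; exact Finset.sum_congr rfl fun i _ => map_smul _ _ _
    _ = ∑ i ∈ rb.index, ∑ k ∈ (ℛ ℂ (rb.left i)).index,
          antipode (R := ℂ) ((ℛ ℂ (rb.left i)).left k) *
            ((ℛ ℂ (rb.left i)).right k * W (rb.right i)) := by
        refine Finset.sum_congr rfl fun i _ => ?_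
        calc counit (R := ℂ) (rb.left i) • W (rb.right i)
            = (counit (R := ℂ) (rb.left i) • (1:A)) * W (rb.right i) := by
              rw [smul_mul_assoc, one_mul]
          _ = (∑ k ∈ (ℛ ℂ (rb.left i)).index,
                antipode (R := ℂ) ((ℛ ℂ (rb.left i)).left k) *
                  (ℛ ℂ (rb.left i)).right k) * W (rb.right i) := by
              rw [HopfAlgebra.sum_antipode_mul_eq_smul (ℛ ℂ (rb.left i))]
          _ = ∑ k ∈ (ℛ ℂ (rb.left i)).index,
                antipode (R := ℂ) ((ℛ ℂ (rb.left i)).left k) *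
                  ((ℛ ℂ (rb.left i)).right k * W (rb.right i)) := by
              rw [Finset.sum_mul]
              exact Finset.sum_congr rfl fun k _ => mul_assoc _ _ _
    _ = ∑ i ∈ rb.index, ∑ k ∈ (ℛ ℂ (rb.right i)).index,
          antipode (R := ℂ) (rb.left i) *
            ((ℛ ℂ (rb.right i)).left k * W ((ℛ ℂ (rb.right i)).right k)) := key
    _ = ∑ i ∈ rb.index, φ (rb.right i * a) • antipode (R := ℂ) (rb.left i) := by
        refine Finset.sum_congr rfl fun i _ => ?_
        rw [← Finset.mul_sum, hU (ℛ ℂ (rb.right i)), mul_smul_comm, mul_one]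

/-- (A^op): Σ a₁ φ(a₂ b) = Σ S⁻¹(b₁) φ(a b₂) -/
lemma exchange2 (hS : Function.Bijective (antipode (R := ℂ) (A := A)))
    (a b : A) {T_ra : Type*} (ra : Coalgebra.Repr ℂ a T_ra) {T_rb : Type*} (rb : Coalgebra.Repr ℂ b T_rb) :
    ∑ j ∈ ra.index, φ (ra.right j * b) • ra.left j
      = ∑ i ∈ rb.index, φ (a * rb.right i) • Sinv hS (rb.left i) := by
  set W : A →ₗ[ℂ] A :=
    ∑ j ∈ ra.index, (φ ∘ₗ LinearMap.mulLeft ℂ (ra.right j)).smulRight (ra.left j) with hWdef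
  have hW : ∀ z : A, W z = ∑ j ∈ ra.index, φ (ra.right j * z) • ra.left j := by
    intro z
    simp [hWdef, LinearMap.sum_apply]
  have hU : ∀ {x : A} (r1 : Coalgebra.Repr ℂ x (A × A)),
      ∑ k ∈ r1.index, W (r1.right k) * r1.left k = φ (a * x) • (1:A) := by
    intro x r1
    rw [← phiL_prod φ hφL ra r1]
    rw [Finset.sum_comm]
    exact Finset.sum_congr rfl fun k _ => by
      rw [hW, Finset.sum_mul]
      exact Finset.sum_congr rfl fun j _ => by rw [smul_mul_assoc]
  set T : A ⊗[ℂ] (A ⊗[ℂ] A) →ₗ[ℂ] A :=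
    LinearMap.mul' ℂ A ∘ₗ (TensorProduct.comm ℂ A A).toLinearMap ∘ₗ
      TensorProduct.map (Sinv hS)
        (LinearMap.mul' ℂ A ∘ₗ (TensorProduct.comm ℂ A A).toLinearMap ∘ₗ
          LinearMap.lTensor A W) with hTdef
  have hT : ∀ x y z : A, T (x ⊗ₜ[ℂ] (y ⊗ₜ[ℂ] z)) =
      (W z * y) * Sinv hS x := by
    intro x y z; simp [hTdef]
  have hco := Coalgebra.sum_tmul_tmul_eq (R := ℂ) rb
    (fun i => ℛ ℂ (rb.left i)) (fun i => ℛ ℂ (rb.right i))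
  have key := congrArg T hco
  simp only [map_sum, hT] at key
  calc ∑ j ∈ ra.index, φ (ra.right j * b) • ra.left j
      = W b := (hW b).symm
    _ = W (∑ i ∈ rb.index, counit (R := ℂ) (rb.left i) • rb.right i) := by
        rw [sum_counit_smul]
    _ = ∑ i ∈ rb.index, counit (R := ℂ) (rb.left i) • W (rb.right i) := by
        rw [map_sum]; exact Finset.sum_congr rfl fun i _ => map_smul _ _ _
    _ = ∑ i ∈ rb.index, ∑ k ∈ (ℛ ℂ (rb.left i)).index,
          (W (rb.right i) * (ℛ ℂ (rb.left i)).right k) *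
            Sinv hS ((ℛ ℂ (rb.left i)).left k) := by
        refine Finset.sum_congr rfl fun i _ => ?_
        calc counit (R := ℂ) (rb.left i) • W (rb.right i)
            = W (rb.right i) * (counit (R := ℂ) (rb.left i) • (1:A)) := by
              rw [mul_smul_comm, mul_one]
          _ = W (rb.right i) * (∑ k ∈ (ℛ ℂ (rb.left i)).index,
                (ℛ ℂ (rb.left i)).right k * Sinv hS ((ℛ ℂ (rb.left i)).left k)) := by
              rw [sum_mul_Sinv hS (ℛ ℂ (rb.left i))]
          _ = ∑ k ∈ (ℛ ℂ (rb.left i)).index,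
                (W (rb.right i) * (ℛ ℂ (rb.left i)).right k) *
                  Sinv hS ((ℛ ℂ (rb.left i)).left k) := by
              rw [Finset.mul_sum]
              exact Finset.sum_congr rfl fun k _ => (mul_assoc _ _ _).symm
    _ = ∑ i ∈ rb.index, ∑ k ∈ (ℛ ℂ (rb.right i)).index,
          (W ((ℛ ℂ (rb.right i)).right k) * (ℛ ℂ (rb.right i)).left k) *
            Sinv hS (rb.left i) := key
    _ = ∑ i ∈ rb.index, φ (a * rb.right i) • Sinv hS (rb.left i) := by
        refine Finset.sum_congr rfl fun i _ => ?_
        rw [← Finset.sum_mul, hU (ℛ ℂ (rb.right i)), smul_mul_assoc, one_mul]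

omit hφL in
lemma phi_sum_smul_mul {ι : Type*} (s : Finset ι) (c : ι → ℂ) (v : ι → A) (x : A) :
    φ ((∑ i ∈ s, c i • v i) * x) = ∑ i ∈ s, c i * φ (v i * x) := by
  rw [Finset.sum_mul, map_sum]
  exact Finset.sum_congr rfl fun i _ => by rw [smul_mul_assoc, map_smul, smul_eq_mul]

omit hφL in
lemma phi_mul_sum_smul {ι : Type*} (s : Finset ι) (c : ι → ℂ) (v : ι → A) (x : A) :
    φ (x * (∑ i ∈ s, c i • v i)) = ∑ i ∈ s, c i * φ (x * v i) := by
  rw [Finset.mul_sum, map_sum]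
  exact Finset.sum_congr rfl fun i _ => by rw [mul_smul_comm, map_smul, smul_eq_mul]

variable (σ : A ≃ₐ[ℂ] A) (hσ : ∀ a b : A, φ (a * b) = φ (b * σ a))

include hσ

/-- (F): Σ S(b₁) φ(b₂ x) = Σ S⁻¹((σb)₁) φ(x (σb)₂) -/
lemma exchange3 (hS : Function.Bijective (antipode (R := ℂ) (A := A)))
    (x b c : A) (hbc : c = σ b) {T_rb : Type*} (rb : Coalgebra.Repr ℂ b T_rb) {T_rc : Type*} (rc : Coalgebra.Repr ℂ c T_rc) :
    ∑ i ∈ rb.index, φ (rb.right i * x) • antipode (R := ℂ) (rb.left i)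
      = ∑ i ∈ rc.index, φ (x * rc.right i) • Sinv hS (rc.left i) := by
  have h1 := exchange1 φ hφL x b (ℛ ℂ x) rb
  have h2 := exchange2 φ hφL hS x c (ℛ ℂ x) rc
  rw [← h1, ← h2]
  exact Finset.sum_congr rfl fun j _ => by rw [hσ b ((ℛ ℂ x).right j), hbc]

/-- (L4): Σ S²(b₁) φ(b₂ x) = Σ (σb)₁ φ(x (σb)₂) -/
lemma exchange4 (hS : Function.Bijective (antipode (R := ℂ) (A := A)))
    (x b c : A) (hbc : c = σ b) {T_rb : Type*} (rb : Coalgebra.Repr ℂ b T_rb) {T_rc : Type*} (rc : Coalgebra.Repr ℂ c T_rc) :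
    ∑ i ∈ rb.index, φ (rb.right i * x) •
        antipode (R := ℂ) (antipode (R := ℂ) (rb.left i))
      = ∑ i ∈ rc.index, φ (x * rc.right i) • rc.left i := by
  have h := congrArg (antipode (R := ℂ)) (exchange3 φ hφL σ hσ hS x b c hbc rb rc)
  rw [map_sum, map_sum] at h
  simpa only [map_smul, S_Sinv] using h

/-- (mirror L4): Σ S⁻²(b₁) φ(x b₂) = Σ (σ⁻¹b)₁ φ((σ⁻¹b)₂ x) -/
lemma exchange5 (hS : Function.Bijective (antipode (R := ℂ) (A := A)))
    (x b c : A) (hbc : c = σ.symm b) {T_rb : Type*} (rb : Coalgebra.Repr ℂ b T_rb) {T_rc : Type*} (rc : Coalgebra.Repr ℂ c T_rc) :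
    ∑ i ∈ rb.index, φ (x * rb.right i) • Sinv hS (Sinv hS (rb.left i))
      = ∑ i ∈ rc.index, φ (rc.right i * x) • rc.left i := by
  have h1 := exchange2 φ hφL hS x b (ℛ ℂ x) rb
  have h2 := exchange2 φ hφL hS c x rc (ℛ ℂ x)
  -- apply Sinv to h1
  have h1' := congrArg (Sinv hS) h1
  rw [map_sum, map_sum] at h1'
  simp only [map_smul] at h1'
  rw [← h1', h2]
  exact Finset.sum_congr rfl fun j _ => by
    rw [hbc, hσ (σ.symm b) ((ℛ ℂ x).right j), σ.apply_symm_apply]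

/-- (L'): Σ y₁ ε(σ⁻¹(y₂)) = S²(σ⁻¹ y) -/
lemma lAct_chi2 (hS : Function.Bijective (antipode (R := ℂ) (A := A)))
    (hφf1 : ∀ a : A, (∀ b : A, φ (a * b) = 0) → a = 0)
    (hφf2 : ∀ a : A, (∀ b : A, φ (b * a) = 0) → a = 0)
    (y : A) {T_ry : Type*} (ry : Coalgebra.Repr ℂ y T_ry) :
    ∑ i ∈ ry.index, counit (R := ℂ) (σ.symm (ry.right i)) • ry.left i
      = antipode (R := ℂ) (antipode (R := ℂ) (σ.symm y)) := by
  set b := σ.symm y with hb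
  set rb := ℛ ℂ b
  have h4 : ∀ x : A, ∑ i ∈ rb.index, φ (rb.right i * x) •
      antipode (R := ℂ) (antipode (R := ℂ) (rb.left i))
      = ∑ i ∈ ry.index, φ (x * ry.right i) • ry.left i :=
    fun x => exchange4 φ hφL σ hσ hS x b y (σ.apply_symm_apply y).symm rb ry
  have key : ∀ c : A,
      φ (c * antipode (R := ℂ) (antipode (R := ℂ) b)) =
      φ (c * (∑ i ∈ ry.index, counit (R := ℂ) (σ.symm (ry.right i)) • ry.left i)) := by
    intro c
    set N : A := ∑ i ∈ rb.index,
      φ (c * antipode (R := ℂ) (antipode (R := ℂ) (rb.left i))) • rb.right i with hN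
    set M : A := ∑ i ∈ ry.index, φ (c * ry.left i) • ry.right i with hM
    have hNM : N = σ.symm M := by
      have hz : ∀ x : A, φ ((N - σ.symm M) * x) = 0 := by
        intro x
        have e1 : φ (N * x) = φ (x * M) := by
          rw [hN, hM, phi_sum_smul_mul, phi_mul_sum_smul]
          have := congrArg (φ ∘ₗ LinearMap.mulLeft ℂ c) (h4 x)
          simp only [map_sum, map_smul, LinearMap.coe_comp, Function.comp_apply,
            LinearMap.mulLeft_apply, smul_eq_mul] at this
          calc ∑ i ∈ rb.index,
              φ (c * antipode (R := ℂ) (antipode (R := ℂ) (rb.left i))) * φ (rb.right i * x)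
              = ∑ i ∈ rb.index,
                φ (rb.right i * x) * φ (c * antipode (R := ℂ) (antipode (R := ℂ) (rb.left i))) :=
                Finset.sum_congr rfl fun i _ => mul_comm _ _
            _ = ∑ i ∈ ry.index, φ (x * ry.right i) * φ (c * ry.left i) := this
            _ = ∑ i ∈ ry.index, φ (c * ry.left i) * φ (x * ry.right i) :=
                Finset.sum_congr rfl fun i _ => mul_comm _ _
        have e2 : φ (x * M) = φ (σ.symm M * x) := by
          rw [hσ (σ.symm M) x, σ.apply_symm_apply]
        rw [sub_mul, map_sub, e1, e2, sub_self]
      have := hφf1 _ hz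
      rwa [sub_eq_zero] at this
    have eN : counit (R := ℂ) N = φ (c * antipode (R := ℂ) (antipode (R := ℂ) b)) := by
      rw [hN, map_sum]
      calc ∑ i ∈ rb.index,
          counit (R := ℂ) (φ (c * antipode (R := ℂ) (antipode (R := ℂ) (rb.left i))) • rb.right i)
          = ∑ i ∈ rb.index, counit (R := ℂ) (rb.right i) •
              φ (c * antipode (R := ℂ) (antipode (R := ℂ) (rb.left i))) := by
            exact Finset.sum_congr rfl fun i _ => by
              rw [map_smul]; rw [smul_eq_mul, smul_eq_mul, mul_comm]
        _ = φ (c * antipode (R := ℂ) (antipode (R := ℂ)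
              (∑ i ∈ rb.index, counit (R := ℂ) (rb.right i) • rb.left i))) := by
            rw [map_sum, map_sum, Finset.mul_sum, map_sum]
            exact Finset.sum_congr rfl fun i _ => by
              rw [map_smul, map_smul, mul_smul_comm, map_smul, smul_eq_mul]
        _ = φ (c * antipode (R := ℂ) (antipode (R := ℂ) b)) := by
            rw [sum_smul_counit]
    have eM : counit (R := ℂ) (σ.symm M) =
        φ (c * (∑ i ∈ ry.index, counit (R := ℂ) (σ.symm (ry.right i)) • ry.left i)) := by
      rw [hM, map_sum, map_sum, phi_mul_sum_smul]
      exact Finset.sum_congr rfl fun i _ => by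
        rw [map_smul, map_smul, smul_eq_mul, mul_comm]
    rw [← eN, hNM, eM]
  have hz2 : ∀ c : A, φ (c * ((∑ i ∈ ry.index,
      counit (R := ℂ) (σ.symm (ry.right i)) • ry.left i) -
        antipode (R := ℂ) (antipode (R := ℂ) b))) = 0 := by
    intro c
    rw [mul_sub, map_sub, ← key c, sub_self]
  have := hφf2 _ hz2
  rwa [sub_eq_zero] at this

/-- (N): Σ y₁ ε(σ(y₂)) = S⁻²(σ y) -/
lemma lAct_chi1 (hS : Function.Bijective (antipode (R := ℂ) (A := A)))
    (hφf1 : ∀ a : A, (∀ b : A, φ (a * b) = 0) → a = 0)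
    (hφf2 : ∀ a : A, (∀ b : A, φ (b * a) = 0) → a = 0)
    (z : A) {T_rz : Type*} (rz : Coalgebra.Repr ℂ z T_rz) :
    ∑ i ∈ rz.index, counit (R := ℂ) (σ (rz.right i)) • rz.left i
      = Sinv hS (Sinv hS (σ z)) := by
  set b := σ z with hb
  set rb := ℛ ℂ b
  have h5 : ∀ x : A, ∑ i ∈ rb.index, φ (x * rb.right i) • Sinv hS (Sinv hS (rb.left i))
      = ∑ i ∈ rz.index, φ (rz.right i * x) • rz.left i :=
    fun x => exchange5 φ hφL σ hσ hS x b z (σ.symm_apply_apply z).symm rb rz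
  have key : ∀ c : A,
      φ ((∑ i ∈ rz.index, counit (R := ℂ) (σ (rz.right i)) • rz.left i) * c) =
      φ (Sinv hS (Sinv hS b) * c) := by
    intro c
    set M : A := ∑ i ∈ rz.index, φ (rz.left i * c) • rz.right i with hM
    set N : A := ∑ i ∈ rb.index, φ (Sinv hS (Sinv hS (rb.left i)) * c) • rb.right i with hN
    have hNM : σ M = N := by
      have hz : ∀ x : A, φ (x * (σ M - N)) = 0 := by
        intro x
        have e1 : φ (M * x) = φ (x * N) := by
          rw [hM, hN, phi_sum_smul_mul, phi_mul_sum_smul]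
          have := congrArg (φ ∘ₗ LinearMap.mulRight ℂ c) (h5 x)
          simp only [map_sum, map_smul, LinearMap.coe_comp, Function.comp_apply,
            LinearMap.mulRight_apply, smul_eq_mul] at this
          calc ∑ i ∈ rz.index, φ (rz.left i * c) * φ (rz.right i * x)
              = ∑ i ∈ rz.index, φ (rz.right i * x) * φ (rz.left i * c) :=
                Finset.sum_congr rfl fun i _ => mul_comm _ _
            _ = ∑ i ∈ rb.index, φ (x * rb.right i) * φ (Sinv hS (Sinv hS (rb.left i)) * c) :=
                this.symm
            _ = ∑ i ∈ rb.index, φ (Sinv hS (Sinv hS (rb.left i)) * c) * φ (x * rb.right i) :=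
                Finset.sum_congr rfl fun i _ => mul_comm _ _
        have e2 : φ (M * x) = φ (x * σ M) := hσ M x
        rw [mul_sub, map_sub, ← e2, e1, sub_self]
      have := hφf2 _ hz
      rwa [sub_eq_zero] at this
    have eM : counit (R := ℂ) (σ M) =
        φ ((∑ i ∈ rz.index, counit (R := ℂ) (σ (rz.right i)) • rz.left i) * c) := by
      rw [hM, map_sum, map_sum, phi_sum_smul_mul]
      exact Finset.sum_congr rfl fun i _ => by
        rw [map_smul, map_smul, smul_eq_mul, mul_comm]
    have eN : counit (R := ℂ) N = φ (Sinv hS (Sinv hS b) * c) := by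
      rw [hN, map_sum]
      calc ∑ i ∈ rb.index,
          counit (R := ℂ) (φ (Sinv hS (Sinv hS (rb.left i)) * c) • rb.right i)
          = ∑ i ∈ rb.index, counit (R := ℂ) (rb.right i) •
              φ (Sinv hS (Sinv hS (rb.left i)) * c) := by
            exact Finset.sum_congr rfl fun i _ => by
              rw [map_smul]; rw [smul_eq_mul, smul_eq_mul, mul_comm]
        _ = φ (Sinv hS (Sinv hS
              (∑ i ∈ rb.index, counit (R := ℂ) (rb.right i) • rb.left i)) * c) := by
            rw [map_sum, map_sum, Finset.sum_mul, map_sum]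
            exact Finset.sum_congr rfl fun i _ => by
              rw [map_smul, map_smul, smul_mul_assoc, map_smul, smul_eq_mul]
        _ = φ (Sinv hS (Sinv hS b) * c) := by
            rw [sum_smul_counit]
    rw [← eM, hNM, eN]
  have hz2 : ∀ c : A, φ (((∑ i ∈ rz.index,
      counit (R := ℂ) (σ (rz.right i)) • rz.left i) -
        Sinv hS (Sinv hS b)) * c) = 0 := by
    intro c
    rw [sub_mul, map_sub, key c, sub_self]
  have := hφf1 _ hz2
  rwa [sub_eq_zero] at this

end PhiSec

section ConvSec

/-- convolution product of functionals -/
noncomputable def conv (f g : A →ₗ[ℂ] ℂ) : A →ₗ[ℂ] ℂ :=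
  LinearMap.mul' ℂ ℂ ∘ₗ TensorProduct.map f g ∘ₗ Coalgebra.comul

lemma conv_repr (f g : A →ₗ[ℂ] ℂ) {a : A} {T_r : Type*} (r : Coalgebra.Repr ℂ a T_r) :
    conv f g a = ∑ i ∈ r.index, f (r.left i) * g (r.right i) := by
  simp only [conv, LinearMap.coe_comp, Function.comp_apply, ← r.eq, map_sum,
    TensorProduct.map_tmul, LinearMap.mul'_apply]

lemma conv_counit_left (f : A →ₗ[ℂ] ℂ) : conv Coalgebra.counit f = f := by
  ext a
  rw [conv_repr _ _ (ℛ ℂ a)]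
  calc ∑ i ∈ (ℛ ℂ a).index, counit (R := ℂ) ((ℛ ℂ a).left i) * f ((ℛ ℂ a).right i)
      = f (∑ i ∈ (ℛ ℂ a).index, counit (R := ℂ) ((ℛ ℂ a).left i) • (ℛ ℂ a).right i) := by
        rw [map_sum]
        exact Finset.sum_congr rfl fun i _ => by rw [map_smul, smul_eq_mul]
    _ = f a := by rw [sum_counit_smul]

lemma conv_counit_right (f : A →ₗ[ℂ] ℂ) : conv f Coalgebra.counit = f := by
  ext a
  rw [conv_repr _ _ (ℛ ℂ a)]
  calc ∑ i ∈ (ℛ ℂ a).index, f ((ℛ ℂ a).left i) * counit (R := ℂ) ((ℛ ℂ a).right i)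
      = f (∑ i ∈ (ℛ ℂ a).index, counit (R := ℂ) ((ℛ ℂ a).right i) • (ℛ ℂ a).left i) := by
        rw [map_sum]
        exact Finset.sum_congr rfl fun i _ => by rw [map_smul, smul_eq_mul, mul_comm]
    _ = f a := by rw [sum_smul_counit]

lemma conv_assoc (f g h : A →ₗ[ℂ] ℂ) : conv (conv f g) h = conv f (conv g h) := by
  ext a
  set r := ℛ ℂ a
  set Tc : A ⊗[ℂ] (A ⊗[ℂ] A) →ₗ[ℂ] ℂ :=
    LinearMap.mul' ℂ ℂ ∘ₗ TensorProduct.map f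
      (LinearMap.mul' ℂ ℂ ∘ₗ TensorProduct.map g h) with hTc
  have hTcap : ∀ x y z : A, Tc (x ⊗ₜ[ℂ] (y ⊗ₜ[ℂ] z)) = f x * (g y * h z) := by
    intro x y z; simp [hTc]
  have hco := Coalgebra.sum_tmul_tmul_eq (R := ℂ) r
    (fun i => ℛ ℂ (r.left i)) (fun i => ℛ ℂ (r.right i))
  have key := congrArg Tc hco
  simp only [map_sum, hTcap] at key
  calc conv (conv f g) h a
      = ∑ i ∈ r.index, conv f g (r.left i) * h (r.right i) := conv_repr _ _ r
    _ = ∑ i ∈ r.index, ∑ k ∈ (ℛ ℂ (r.left i)).index,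
          f ((ℛ ℂ (r.left i)).left k) * (g ((ℛ ℂ (r.left i)).right k) * h (r.right i)) := by
        refine Finset.sum_congr rfl fun i _ => ?_
        rw [conv_repr _ _ (ℛ ℂ (r.left i)), Finset.sum_mul]
        exact Finset.sum_congr rfl fun k _ => mul_assoc _ _ _
    _ = ∑ i ∈ r.index, ∑ k ∈ (ℛ ℂ (r.right i)).index,
          f (r.left i) * (g ((ℛ ℂ (r.right i)).left k) * h ((ℛ ℂ (r.right i)).right k)) := by
        exact key
    _ = conv f (conv g h) a := by
        rw [conv_repr _ _ r]
        exact Finset.sum_congr rfl fun i _ => by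
          rw [conv_repr _ _ (ℛ ℂ (r.right i)), Finset.mul_sum]
  done

lemma conv_inv_unique (χ u v : A →ₗ[ℂ] ℂ)
    (h1 : conv u χ = Coalgebra.counit) (h2 : conv χ v = Coalgebra.counit) : u = v := by
  have e := (conv_assoc u χ v).symm
  rw [h2, h1, conv_counit_left, conv_counit_right] at e
  exact e

lemma conv_char_antipode (χ : A →ₗ[ℂ] ℂ) (hχ1 : χ 1 = 1)
    (hχm : ∀ x y : A, χ (x * y) = χ x * χ y) :
    conv χ (χ ∘ₗ antipode (R := ℂ)) = Coalgebra.counit := by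
  ext a
  rw [conv_repr _ _ (ℛ ℂ a)]
  calc ∑ i ∈ (ℛ ℂ a).index, χ ((ℛ ℂ a).left i) * (χ ∘ₗ antipode (R := ℂ)) ((ℛ ℂ a).right i)
      = χ (∑ i ∈ (ℛ ℂ a).index, (ℛ ℂ a).left i * antipode (R := ℂ) ((ℛ ℂ a).right i)) := by
        rw [map_sum]
        exact Finset.sum_congr rfl fun i _ => (hχm _ _).symm
    _ = counit (R := ℂ) a := by
        rw [HopfAlgebra.sum_mul_antipode_eq_smul (ℛ ℂ a), map_smul, hχ1, smul_eq_mul, mul_one]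

lemma conv_antipode_char (χ : A →ₗ[ℂ] ℂ) (hχ1 : χ 1 = 1)
    (hχm : ∀ x y : A, χ (x * y) = χ x * χ y) :
    conv (χ ∘ₗ antipode (R := ℂ)) χ = Coalgebra.counit := by
  ext a
  rw [conv_repr _ _ (ℛ ℂ a)]
  calc ∑ i ∈ (ℛ ℂ a).index, (χ ∘ₗ antipode (R := ℂ)) ((ℛ ℂ a).left i) * χ ((ℛ ℂ a).right i)
      = χ (∑ i ∈ (ℛ ℂ a).index, antipode (R := ℂ) ((ℛ ℂ a).left i) * (ℛ ℂ a).right i) := by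
        rw [map_sum]
        exact Finset.sum_congr rfl fun i _ => (hχm _ _).symm
    _ = counit (R := ℂ) a := by
        rw [HopfAlgebra.sum_antipode_mul_eq_smul (ℛ ℂ a), map_smul, hχ1, smul_eq_mul, mul_one]

lemma char_comp_antipode_one (χ : A →ₗ[ℂ] ℂ) (hχ1 : χ 1 = 1) :
    (χ ∘ₗ antipode (R := ℂ)) 1 = 1 := by
  simp only [LinearMap.coe_comp, Function.comp_apply, antipode_one, hχ1]

lemma char_comp_antipode_mul (χ : A →ₗ[ℂ] ℂ)
    (hχm : ∀ x y : A, χ (x * y) = χ x * χ y) (x y : A) :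
    (χ ∘ₗ antipode (R := ℂ)) (x * y) =
      (χ ∘ₗ antipode (R := ℂ)) x * (χ ∘ₗ antipode (R := ℂ)) y := by
  simp only [LinearMap.coe_comp, Function.comp_apply, antipode_mul, hχm]
  exact mul_comm _ _

/-- χ∘S² = χ for characters -/
lemma char_S2 (χ : A →ₗ[ℂ] ℂ) (hχ1 : χ 1 = 1)
    (hχm : ∀ x y : A, χ (x * y) = χ x * χ y) :
    (χ ∘ₗ antipode (R := ℂ)) ∘ₗ antipode (R := ℂ) = χ := by
  exact conv_inv_unique (χ ∘ₗ antipode (R := ℂ)) _ χ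
    (conv_antipode_char (χ ∘ₗ antipode (R := ℂ))
      (char_comp_antipode_one χ hχ1) (char_comp_antipode_mul χ hχm))
    (conv_antipode_char χ hχ1 hχm)

end ConvSec

end DualMod


open DualMod in
/-- `Σ a₍₁₎ ε(σ(S(a₍₂₎))) = S²(σ⁻¹(a))`, i.e. `δ̂ ⊳ a = S²(σ⁻¹(a))` where
`δ̂ = ε∘σ∘S` is the modular element of the dual. -/
theorem dual_modular_element_left_action
    {A : Type*} [Ring A] [HopfAlgebra ℂ A]
    (hS : Function.Bijective (antipode (R := ℂ) (A := A)))
    (φ : A →ₗ[ℂ] ℂ) (hφ0 : φ ≠ 0)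
    (hφL : ∀ a : A,
      (TensorProduct.rid ℂ A) (LinearMap.lTensor A φ (Coalgebra.comul a)) = φ a • (1 : A))
    (hφf1 : ∀ a : A, (∀ b : A, φ (a * b) = 0) → a = 0)
    (hφf2 : ∀ a : A, (∀ b : A, φ (b * a) = 0) → a = 0)
    (σ : A ≃ₐ[ℂ] A) (hσ : ∀ a b : A, φ (a * b) = φ (b * σ a)) :
    ∀ a : A,
      lAct (Coalgebra.counit ∘ₗ σ.toLinearMap ∘ₗ antipode (R := ℂ)) a =
        antipode (R := ℂ) (antipode (R := ℂ) (σ.symm a)) := by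
  intro a
  have hlact : ∀ (f : A →ₗ[ℂ] ℂ) (x : A),
      lAct f x = ∑ i ∈ (ℛ ℂ x).index, f ((ℛ ℂ x).right i) • (ℛ ℂ x).left i := by
    intro f x
    simp only [lAct, LinearMap.coe_comp, Function.comp_apply, LinearEquiv.coe_coe,
      ← (ℛ ℂ x).eq, map_sum, LinearMap.lTensor_tmul, TensorProduct.rid_tmul]
  have hχ11 : (Coalgebra.counit ∘ₗ σ.toLinearMap : A →ₗ[ℂ] ℂ) 1 = 1 := by
    simp
  have hχ1m : ∀ x y : A, (Coalgebra.counit ∘ₗ σ.toLinearMap : A →ₗ[ℂ] ℂ) (x * y) =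
      (Coalgebra.counit ∘ₗ σ.toLinearMap : A →ₗ[ℂ] ℂ) x *
        (Coalgebra.counit ∘ₗ σ.toLinearMap : A →ₗ[ℂ] ℂ) y := by
    intro x y
    simp [Bialgebra.counit_mul]
  have h2 : ∀ y : A, lAct (Coalgebra.counit ∘ₗ σ.symm.toLinearMap : A →ₗ[ℂ] ℂ) y =
      antipode (R := ℂ) (antipode (R := ℂ) (σ.symm y)) := by
    intro y
    rw [hlact]
    exact lAct_chi2 φ hφL σ hσ hS hφf1 hφf2 y (ℛ ℂ y)
  have hconv1 : conv ((Coalgebra.counit ∘ₗ σ.toLinearMap) ∘ₗ antipode (R := ℂ))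
      (Coalgebra.counit ∘ₗ σ.toLinearMap) = Coalgebra.counit :=
    conv_antipode_char _ hχ11 hχ1m
  have hconv2 : conv (Coalgebra.counit ∘ₗ σ.toLinearMap)
      (Coalgebra.counit ∘ₗ σ.symm.toLinearMap) = Coalgebra.counit := by
    ext x
    rw [conv_repr _ _ (ℛ ℂ x)]
    calc ∑ i ∈ (ℛ ℂ x).index,
        (Coalgebra.counit ∘ₗ σ.toLinearMap : A →ₗ[ℂ] ℂ) ((ℛ ℂ x).left i) *
          (Coalgebra.counit ∘ₗ σ.symm.toLinearMap : A →ₗ[ℂ] ℂ) ((ℛ ℂ x).right i)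
        = (Coalgebra.counit ∘ₗ σ.toLinearMap : A →ₗ[ℂ] ℂ)
            (∑ i ∈ (ℛ ℂ x).index,
              (Coalgebra.counit ∘ₗ σ.symm.toLinearMap : A →ₗ[ℂ] ℂ) ((ℛ ℂ x).right i) •
                (ℛ ℂ x).left i) := by
          rw [map_sum]
          exact Finset.sum_congr rfl fun i _ => by rw [map_smul, smul_eq_mul, mul_comm]
      _ = (Coalgebra.counit ∘ₗ σ.toLinearMap : A →ₗ[ℂ] ℂ)
            (lAct (Coalgebra.counit ∘ₗ σ.symm.toLinearMap) x) := by
          rw [hlact]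
      _ = (Coalgebra.counit ∘ₗ σ.toLinearMap : A →ₗ[ℂ] ℂ)
            (antipode (R := ℂ) (antipode (R := ℂ) (σ.symm x))) := by rw [h2]
      _ = (((Coalgebra.counit ∘ₗ σ.toLinearMap) ∘ₗ antipode (R := ℂ)) ∘ₗ
            antipode (R := ℂ)) (σ.symm x) := rfl
      _ = (Coalgebra.counit ∘ₗ σ.toLinearMap : A →ₗ[ℂ] ℂ) (σ.symm x) := by
          rw [char_S2 _ hχ11 hχ1m]
      _ = Coalgebra.counit (R := ℂ) x := by
          simp
  have hdelta : (Coalgebra.counit ∘ₗ σ.toLinearMap ∘ₗ antipode (R := ℂ) : A →ₗ[ℂ] ℂ) =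
      Coalgebra.counit ∘ₗ σ.symm.toLinearMap := by
    have : ((Coalgebra.counit ∘ₗ σ.toLinearMap) ∘ₗ antipode (R := ℂ) : A →ₗ[ℂ] ℂ) =
        Coalgebra.counit ∘ₗ σ.symm.toLinearMap :=
      conv_inv_unique (Coalgebra.counit ∘ₗ σ.toLinearMap) _ _ hconv1 hconv2
    rw [← this]
    exact DFunLike.ext _ _ fun x => rfl
  rw [hdelta]
  exact h2 a
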